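/- Let G be a connected graph with n ≥ 2 vertices and m edges. For any two original vertices i, j ∈ V, the resistance distance in the triangulation and that in the subdivision are related by Ω^T_{ij} = (1/3)·Ω^S_{ij}. -/

import Mathlib

open BigOperators Matrix

namespace KirchhoffPaper

/-- `B` is a Moore–Penrose (pseudo)inverse of `A`. -/
def IsMoorePenrose {n : Type*} [Fintype n] [DecidableEq n] (A B : Matrix n n ℝ) : Prop :=
  A * B * A = A ∧ B * A * B = B ∧ (A * B)ᵀ = A * B ∧ (B * A)ᵀ = B * A

variable {V : Type*}

/-- The resistance distance between `i` and `j` in `G`: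
`Ω_{ij} = L⁺_{ii} + L⁺_{jj} - 2 L⁺_{ij}` with `L⁺` the Moore–Penrose inverse of the Laplacian. -/
noncomputable def resistanceDistance [Fintype V] [DecidableEq V]
    (G : SimpleGraph V) [DecidableRel G.Adj] (i j : V) : ℝ :=
  letI := Classical.propDecidable
  if h : ∃ B, IsMoorePenrose (G.lapMatrix ℝ) B then
    h.choose i i + h.choose j j - 2 * h.choose i j
  else 0

/-- Kirchhoff index `R(G) = Σ_{{i,j}⊆V} Ω_{ij}` (as half the sum over ordered pairs;
note `Ω_{ii} = 0`). -/
noncomputable def kirchhoffIndex [Fintype V] [DecidableEq V]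
    (G : SimpleGraph V) [DecidableRel G.Adj] : ℝ :=
  (1 / 2) * ∑ i, ∑ j, resistanceDistance G i j

/-- Additive degree-Kirchhoff index `R⁺(G) = Σ_{{i,j}⊆V} (d_i + d_j) Ω_{ij}`. -/
noncomputable def addDegKirchhoffIndex [Fintype V] [DecidableEq V]
    (G : SimpleGraph V) [DecidableRel G.Adj] : ℝ :=
  (1 / 2) * ∑ i, ∑ j, ((G.degree i : ℝ) + (G.degree j : ℝ)) * resistanceDistance G i j

/-- Multiplicative degree-Kirchhoff index `R*(G) = Σ_{{i,j}⊆V} d_i d_j Ω_{ij}`. -/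
noncomputable def mulDegKirchhoffIndex [Fintype V] [DecidableEq V]
    (G : SimpleGraph V) [DecidableRel G.Adj] : ℝ :=
  (1 / 2) * ∑ i, ∑ j, ((G.degree i : ℝ) * (G.degree j : ℝ)) * resistanceDistance G i j

/-- The subdivision `S(G)`: each edge of `G` is replaced by a path of length two through a
new vertex (one new vertex per edge of `G`). -/
def subdivision [DecidableEq V] (G : SimpleGraph V) : SimpleGraph (V ⊕ G.edgeSet) where
  Adj x y :=
    match x, y with
    | Sum.inl u, Sum.inr e => u ∈ (e : Sym2 V)
    | Sum.inr e, Sum.inl u => u ∈ (e : Sym2 V)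
    | _, _ => False
  symm := by constructor; rintro (u | e) (v | f) h <;> exact h
  loopless := by constructor; rintro (u | e) h <;> exact h

/-- The triangulation `T(G)`: each edge `uv` of `G` is turned into a triangle `uwv`
with `w` a new vertex associated with `uv`. -/
def triangulation [DecidableEq V] (G : SimpleGraph V) : SimpleGraph (V ⊕ G.edgeSet) where
  Adj x y :=
    match x, y with
    | Sum.inl u, Sum.inl v => G.Adj u v
    | Sum.inl u, Sum.inr e => u ∈ (e : Sym2 V)
    | Sum.inr e, Sum.inl u => u ∈ (e : Sym2 V)
    | _, _ => False
  symm := by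
    constructor
    rintro (u | e) (v | f) h
    · exact G.adj_symm h
    · exact h
    · exact h
    · exact h
  loopless := by
    constructor
    rintro (u | e) h
    · exact G.loopless.irrefl u h
    · exact h

instance [Fintype V] [DecidableEq V] (G : SimpleGraph V) [DecidableRel G.Adj] :
    DecidableRel (subdivision G).Adj := fun x y =>
  match x, y with
  | Sum.inl _, Sum.inl _ => inferInstanceAs (Decidable False)
  | Sum.inl u, Sum.inr e => inferInstanceAs (Decidable (u ∈ (e : Sym2 V)))
  | Sum.inr e, Sum.inl u => inferInstanceAs (Decidable (u ∈ (e : Sym2 V)))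
  | Sum.inr _, Sum.inr _ => inferInstanceAs (Decidable False)

instance [Fintype V] [DecidableEq V] (G : SimpleGraph V) [DecidableRel G.Adj] :
    DecidableRel (triangulation G).Adj := fun x y =>
  match x, y with
  | Sum.inl u, Sum.inl v => inferInstanceAs (Decidable (G.Adj u v))
  | Sum.inl u, Sum.inr e => inferInstanceAs (Decidable (u ∈ (e : Sym2 V)))
  | Sum.inr e, Sum.inl u => inferInstanceAs (Decidable (u ∈ (e : Sym2 V)))
  | Sum.inr _, Sum.inr _ => inferInstanceAs (Decidable False)

/-- A bundled finite simple graph (with decidable adjacency), used for iterating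
the subdivision and triangulation constructions. -/
structure FGraph where
  V : Type*
  [fV : Fintype V]
  [dV : DecidableEq V]
  G : SimpleGraph V
  [dG : DecidableRel G.Adj]

attribute [instance] FGraph.fV FGraph.dV FGraph.dG

/-- Subdivision, as an operation on bundled graphs. -/
def FGraph.subdiv (H : FGraph) : FGraph := { V := H.V ⊕ H.G.edgeSet, G := subdivision H.G }

/-- Triangulation, as an operation on bundled graphs. -/
def FGraph.triang (H : FGraph) : FGraph := { V := H.V ⊕ H.G.edgeSet, G := triangulation H.G }

/-- Kirchhoff index of a bundled graph. -/
noncomputable def FGraph.R (H : FGraph) : ℝ := kirchhoffIndex H.G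

/-- Additive degree-Kirchhoff index of a bundled graph. -/
noncomputable def FGraph.Rplus (H : FGraph) : ℝ := addDegKirchhoffIndex H.G

/-- Multiplicative degree-Kirchhoff index of a bundled graph. -/
noncomputable def FGraph.Rstar (H : FGraph) : ℝ := mulDegKirchhoffIndex H.G

section Aux

variable {W : Type*} [Fintype W] [DecidableEq W]

/-- Moore-Penrose inverses are unique. -/
lemma isMoorePenrose_unique {A B C : Matrix W W ℝ}
    (hB : IsMoorePenrose A B) (hC : IsMoorePenrose A C) : B = C := by
  obtain ⟨hB1, hB2, hB3, hB4⟩ := hB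
  obtain ⟨hC1, hC2, hC3, hC4⟩ := hC
  have hAB : A * B = A * C := by
    calc A * B = (A * B)ᵀ := hB3.symm
    _ = ((A * C * A) * B)ᵀ := by rw [hC1]
    _ = ((A * C) * (A * B))ᵀ := by noncomm_ring
    _ = (A * B)ᵀ * (A * C)ᵀ := by rw [Matrix.transpose_mul]
    _ = (A * B) * (A * C) := by rw [hB3, hC3]
    _ = (A * B * A) * C := by noncomm_ring
    _ = A * C := by rw [hB1]
  have hBA : B * A = C * A := by
    calc B * A = (B * A)ᵀ := hB4.symm
    _ = (B * (A * C * A))ᵀ := by rw [hC1]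
    _ = ((B * A) * (C * A))ᵀ := by noncomm_ring
    _ = (C * A)ᵀ * (B * A)ᵀ := by rw [Matrix.transpose_mul]
    _ = (C * A) * (B * A) := by rw [hB4, hC4]
    _ = C * (A * B * A) := by noncomm_ring
    _ = C * A := by rw [hB1]
  calc B = B * A * B := hB2.symm
  _ = B * (A * C) := by rw [mul_assoc, hAB]
  _ = (C * A) * C := by rw [← mul_assoc, hBA]
  _ = C := hC2

lemma isMoorePenrose_transpose {A B : Matrix W W ℝ}
    (hB : IsMoorePenrose A B) : IsMoorePenrose Aᵀ Bᵀ := by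
  obtain ⟨h1, h2, h3, h4⟩ := hB
  have t1 := congrArg Matrix.transpose h1
  have t2 := congrArg Matrix.transpose h2
  simp only [Matrix.transpose_mul] at t1 t2
  refine ⟨?_, ?_, ?_, ?_⟩
  · rw [Matrix.mul_assoc]; exact t1
  · rw [Matrix.mul_assoc]; exact t2
  · have h : Aᵀ * Bᵀ = (B * A)ᵀ := (Matrix.transpose_mul B A).symm
    rw [h, Matrix.transpose_transpose, h4]
  · have h : Bᵀ * Aᵀ = (A * B)ᵀ := (Matrix.transpose_mul A B).symm
    rw [h, Matrix.transpose_transpose, h3]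

lemma isMoorePenrose_symm {A B : Matrix W W ℝ} (hA : Aᵀ = A)
    (hB : IsMoorePenrose A B) : Bᵀ = B := by
  have h := isMoorePenrose_transpose hB
  rw [hA] at h
  exact isMoorePenrose_unique h hB

/-- Every real symmetric matrix has a Moore-Penrose inverse. -/
lemma exists_isMoorePenrose {A : Matrix W W ℝ} (hA : Aᵀ = A) :
    ∃ B, IsMoorePenrose A B := by
  have hH : A.IsHermitian := by
    rwa [Matrix.IsHermitian, Matrix.conjTranspose_eq_transpose_of_trivial]
  set U : Matrix W W ℝ := (hH.eigenvectorUnitary : Matrix W W ℝ) with hU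
  set d : W → ℝ := RCLike.ofReal ∘ hH.eigenvalues with hd
  have hspec : A = U * Matrix.diagonal d * star U := hH.spectral_theorem
  have hU1 : star U * U = 1 := Matrix.mem_unitaryGroup_iff'.mp hH.eigenvectorUnitary.2
  have hstar : star U = Uᵀ := by
    rw [Matrix.star_eq_conjTranspose, Matrix.conjTranspose_eq_transpose_of_trivial]
  have key : ∀ f g : W → ℝ, (U * Matrix.diagonal f * star U) * (U * Matrix.diagonal g * star U)
      = U * Matrix.diagonal (fun i => f i * g i) * star U := by
    intro f g
    calc (U * Matrix.diagonal f * star U) * (U * Matrix.diagonal g * star U)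
        = U * (Matrix.diagonal f * (star U * U) * Matrix.diagonal g) * star U := by
          noncomm_ring
    _ = U * Matrix.diagonal (fun i => f i * g i) * star U := by
          rw [hU1, Matrix.mul_one, Matrix.diagonal_mul_diagonal]
  have symq : ∀ f : W → ℝ, (U * Matrix.diagonal f * star U)ᵀ = U * Matrix.diagonal f * star U := by
    intro f
    rw [hstar, Matrix.transpose_mul, Matrix.transpose_mul, Matrix.transpose_transpose,
      Matrix.diagonal_transpose, Matrix.mul_assoc]
  have hfun1 : (fun i => d i * (d i)⁻¹ * d i) = d := by
    funext i
    by_cases h : d i = 0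
    · simp [h]
    · field_simp
  have hfun2 : (fun i => (d i)⁻¹ * d i * (d i)⁻¹) = fun i => (d i)⁻¹ := by
    funext i
    by_cases h : d i = 0
    · simp [h]
    · field_simp
  refine ⟨U * Matrix.diagonal (fun i => (d i)⁻¹) * star U, ?_, ?_, ?_, ?_⟩ <;> rw [hspec]
  · simp only [key]
    rw [hfun1]
  · simp only [key]
    rw [hfun2]
  · simp only [key]
    rw [symq]
  · simp only [key]
    rw [symq]

/-- For a connected graph, any vector with zero sum is in the range of the Laplacian,
and `B *ᵥ v` is an explicit preimage whenever `L * B * L = L`. -/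
lemma lap_solve {H : SimpleGraph W} [DecidableRel H.Adj] (hH : H.Connected)
    {B : Matrix W W ℝ}
    (hB : IsMoorePenrose (H.lapMatrix ℝ) B)
    {v : W → ℝ} (hv : ∑ w, v w = 0) :
    (H.lapMatrix ℝ) *ᵥ (B *ᵥ v) = v := by
  obtain ⟨hB1, hB2, hB3, hB4⟩ := hB
  set L := H.lapMatrix ℝ with hLdef
  have hL : Lᵀ = L := H.isSymm_lapMatrix ℝ
  have hLLB : L * L * B = L := by
    rw [Matrix.mul_assoc]
    calc L * (L * B) = Lᵀ * (L * B)ᵀ := by rw [hL, hB3]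
    _ = ((L * B) * L)ᵀ := (Matrix.transpose_mul _ _).symm
    _ = Lᵀ := by rw [hB1]
    _ = L := hL
  set w : W → ℝ := v - L *ᵥ (B *ᵥ v) with hw
  have hker : L *ᵥ w = 0 := by
    rw [hw, Matrix.mulVec_sub, Matrix.mulVec_mulVec, Matrix.mulVec_mulVec, hLLB]
    simp
  have hconst : ∀ a b : W, w a = w b := by
    have h0 : Matrix.toLin' L w = 0 := by
      rw [Matrix.toLin'_apply]; exact hker
    intro a b
    exact (SimpleGraph.lapMatrix_mulVec_eq_zero_iff_forall_reachable (G := H)).mp hker a b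
      (hH.preconnected a b)
  have hsum : ∑ a, w a = 0 := by
    have hcol : ∀ b, ∑ a, L a b = 0 := by
      intro b
      have hz : (L *ᵥ (fun _ => 1)) b = 0 := by
        rw [H.lapMatrix_mulVec_const_eq_zero]; rfl
      rw [Matrix.mulVec, dotProduct] at hz
      simp only [mul_one] at hz
      rw [← hz]
      refine Finset.sum_congr rfl fun a _ => ?_
      conv_lhs => rw [← hL]
      rfl
    have hzero : ∑ a, (L *ᵥ (B *ᵥ v)) a = 0 := by
      simp only [Matrix.mulVec, dotProduct]
      rw [Finset.sum_comm]
      refine Finset.sum_eq_zero fun b _ => ?_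
      rw [← Finset.sum_mul, hcol, zero_mul]
    simp only [hw, Pi.sub_apply, Finset.sum_sub_distrib, hv, hzero, sub_zero]
  haveI hne : Nonempty W := hH.nonempty
  have hwz : ∀ a, w a = 0 := by
    intro a
    have h1 : ∑ b, w b = (Fintype.card W : ℝ) * w a := by
      rw [Finset.sum_congr rfl fun b _ => hconst b a]
      rw [Finset.sum_const, Finset.card_univ, nsmul_eq_mul]
    have hcard : (0 : ℝ) < (Fintype.card W : ℝ) := by
      exact_mod_cast Fintype.card_pos
    have h2 := h1.symm.trans hsum
    exact (mul_eq_zero.mp h2).resolve_left (ne_of_gt hcard)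
  have hw0 : w = 0 := funext hwz
  rw [hw] at hw0
  exact (sub_eq_zero.mp hw0).symm

/-- Quadratic form of a pseudoinverse evaluated on a vector in the range. -/
lemma quad_eq {L B : Matrix W W ℝ} (hL : Lᵀ = L) (hLBL : L * B * L = L)
    {v x : W → ℝ} (hx : L *ᵥ x = v) : v ⬝ᵥ (B *ᵥ v) = v ⬝ᵥ x := by
  subst hx
  have hxL : x ᵥ* L = L *ᵥ x := by
    rw [← Matrix.mulVec_transpose, hL]
  rw [Matrix.mulVec_mulVec, Matrix.dotProduct_mulVec]
  have h3 : (L *ᵥ x) ᵥ* (B * L) = L *ᵥ x := by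
    rw [← hxL, Matrix.vecMul_vecMul, ← Matrix.mul_assoc, hLBL]
  rw [h3]

lemma res_formula {W : Type*} [instF : Fintype W] [instE : DecidableEq W] (H : SimpleGraph W)
    [instR : DecidableRel H.Adj] (i j : W)
    (hex : ∃ B, IsMoorePenrose (H.lapMatrix ℝ) B) :
    ∃ C, IsMoorePenrose (H.lapMatrix ℝ) C ∧
      resistanceDistance H i j = C i i + C j j - 2 * C i j := by
  have h1 : (fun a b => Classical.propDecidable (H.Adj a b)) = instR := Subsingleton.elim _ _
  have h2 : (fun a b : W => Classical.propDecidable (a = b)) = instE := Subsingleton.elim _ _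
  simp only [resistanceDistance]
  rw [h1, h2]
  rw [dif_pos hex]
  exact ⟨hex.choose, hex.choose_spec, rfl⟩

lemma resistance_eq_quad (H : SimpleGraph W) [DecidableRel H.Adj]
    (hex : ∃ B, IsMoorePenrose (H.lapMatrix ℝ) B)
    (hsym : (hex.choose)ᵀ = hex.choose) (i j : W) :
    resistanceDistance H i j =
      (Pi.single i 1 - Pi.single j 1) ⬝ᵥ (hex.choose *ᵥ (Pi.single i 1 - Pi.single j 1)) := by
  obtain ⟨C, hC, hres⟩ := res_formula H i j hex
  have hCeq : C = hex.choose := isMoorePenrose_unique hC hex.choose_spec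
  rw [hres, hCeq]
  have hji : hex.choose j i = hex.choose i j := by
    conv_lhs => rw [← hsym]
    rfl
  rw [Matrix.mulVec_sub, Matrix.mulVec_single_one, Matrix.mulVec_single_one,
    sub_dotProduct, single_dotProduct, single_dotProduct]
  simp only [Pi.sub_apply, mul_one, Matrix.col_apply]
  ring_nf
  rw [hji]
  ring

end Aux

section GraphAux

variable {V : Type*} [Fintype V] [DecidableEq V] (G : SimpleGraph V) [DecidableRel G.Adj]

@[simp] lemma subdivision_adj_ll (u v : V) :
    (subdivision G).Adj (Sum.inl u) (Sum.inl v) ↔ False := Iff.rfl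

@[simp] lemma subdivision_adj_lr (u : V) (e : G.edgeSet) :
    (subdivision G).Adj (Sum.inl u) (Sum.inr e) ↔ u ∈ (e : Sym2 V) := Iff.rfl

@[simp] lemma subdivision_adj_rl (u : V) (e : G.edgeSet) :
    (subdivision G).Adj (Sum.inr e) (Sum.inl u) ↔ u ∈ (e : Sym2 V) := Iff.rfl

@[simp] lemma subdivision_adj_rr (e f : G.edgeSet) :
    (subdivision G).Adj (Sum.inr e) (Sum.inr f) ↔ False := Iff.rfl

@[simp] lemma triangulation_adj_ll (u v : V) :
    (triangulation G).Adj (Sum.inl u) (Sum.inl v) ↔ G.Adj u v := Iff.rfl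

@[simp] lemma triangulation_adj_lr (u : V) (e : G.edgeSet) :
    (triangulation G).Adj (Sum.inl u) (Sum.inr e) ↔ u ∈ (e : Sym2 V) := Iff.rfl

@[simp] lemma triangulation_adj_rl (u : V) (e : G.edgeSet) :
    (triangulation G).Adj (Sum.inr e) (Sum.inl u) ↔ u ∈ (e : Sym2 V) := Iff.rfl

@[simp] lemma triangulation_adj_rr (e f : G.edgeSet) :
    (triangulation G).Adj (Sum.inr e) (Sum.inr f) ↔ False := Iff.rfl

lemma subdivision_connected (hG : G.Connected) : (subdivision G).Connected := by
  have hreach : ∀ u v : V, G.Adj u v →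
      (subdivision G).Reachable (Sum.inl u) (Sum.inl v) := by
    intro u v huv
    have he : s(u, v) ∈ G.edgeSet := huv
    have h1 : (subdivision G).Adj (Sum.inl u) (Sum.inr ⟨s(u, v), he⟩) :=
      Sym2.mem_mk_left u v
    have h2 : (subdivision G).Adj (Sum.inr ⟨s(u, v), he⟩) (Sum.inl v) :=
      Sym2.mem_mk_right u v
    exact h1.reachable.trans h2.reachable
  have hVreach : ∀ u v : V, (subdivision G).Reachable (Sum.inl u) (Sum.inl v) := by
    intro u v
    obtain ⟨p⟩ := hG.preconnected u v
    induction p with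
    | nil => exact SimpleGraph.Reachable.refl _
    | cons h _ ih => exact (hreach _ _ h).trans ih
  have hend : ∀ e : G.edgeSet, ∃ u : V, (subdivision G).Adj (Sum.inl u) (Sum.inr e) := by
    rintro ⟨s, hs⟩
    induction s using Sym2.ind with
    | _ a b => exact ⟨a, Sym2.mem_mk_left a b⟩
  rw [SimpleGraph.connected_iff]
  refine ⟨?_, ⟨Sum.inl hG.nonempty.some⟩⟩
  · rintro (u | e) (v | f)
    · exact hVreach u v
    · obtain ⟨w, hw⟩ := hend f
      exact (hVreach u w).trans hw.reachable
    · obtain ⟨w, hw⟩ := hend e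
      exact hw.symm.reachable.trans (hVreach w v)
    · obtain ⟨w, hw⟩ := hend e
      obtain ⟨w', hw'⟩ := hend f
      exact hw.symm.reachable.trans ((hVreach w w').trans hw'.reachable)

lemma subdivision_le_triangulation : subdivision G ≤ triangulation G := by
  rintro (u | e) (v | f) h
  · exact h.elim
  · exact h
  · exact h
  · exact h.elim

lemma triangulation_connected (hG : G.Connected) : (triangulation G).Connected :=
  (subdivision_connected G hG).mono (subdivision_le_triangulation G)

/-- Laplacian row formula in "if Adj" form. -/
lemma lap_row {W : Type*} [Fintype W] [DecidableEq W] (H : SimpleGraph W)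
    [DecidableRel H.Adj] (x : W → ℝ) (a : W) :
    ((H.lapMatrix ℝ) *ᵥ x) a = ∑ b, if H.Adj a b then x a - x b else 0 := by
  rw [SimpleGraph.lapMatrix_mulVec_apply]
  have h1 : ∑ b, (if H.Adj a b then x a - x b else 0)
      = ∑ b ∈ H.neighborFinset a, (x a - x b) := by
    rw [SimpleGraph.neighborFinset_eq_filter, Finset.sum_filter]
  rw [h1, Finset.sum_sub_distrib, Finset.sum_const, nsmul_eq_mul]
  rfl

lemma sum_ite_mem_sym2 {a b : V} (hab : a ≠ b) (f : V → ℝ) :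
    ∑ v : V, (if v ∈ s(a, b) then f v else 0) = f a + f b := by
  have key : ∀ v : V, (if v ∈ s(a, b) then f v else 0)
      = (if v = a then f v else 0) + (if v = b then f v else 0) := by
    intro v
    simp only [Sym2.mem_iff]
    by_cases h1 : v = a <;> by_cases h2 : v = b
    · exact absurd (h1 ▸ h2) hab
    · simp [h1, h2, hab, Ne.symm hab]
    · simp [h1, h2, hab, Ne.symm hab]
    · simp [h1, h2, hab, Ne.symm hab]
  simp_rw [key]
  rw [Finset.sum_add_distrib, Finset.sum_ite_eq' Finset.univ a f,
    Finset.sum_ite_eq' Finset.univ b f]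
  simp

/-- Sum over edges incident to `u` equals sum over neighbors of `u`. -/
lemma sum_edge_incident (u : V) (g : Sym2 V → ℝ) :
    ∑ e : G.edgeSet, (if u ∈ (e : Sym2 V) then g e else 0)
      = ∑ v : V, (if G.Adj u v then g s(u, v) else 0) := by
  rw [← Finset.sum_filter, ← Finset.sum_filter]
  refine Finset.sum_bij' (fun e he => Sym2.Mem.other' (Finset.mem_filter.mp he).2)
    (fun v hv => ⟨s(u, v), (Finset.mem_filter.mp hv).2⟩) ?_ ?_ ?_ ?_ ?_
  · intro e he
    have hm := (Finset.mem_filter.mp he).2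
    rw [Finset.mem_filter]
    refine ⟨Finset.mem_univ _, ?_⟩
    rw [← SimpleGraph.mem_edgeSet]
    rw [Sym2.other_spec' hm]
    exact e.2
  · intro v hv
    rw [Finset.mem_filter]
    exact ⟨Finset.mem_univ _, Sym2.mem_mk_left u v⟩
  · intro e he
    have hm := (Finset.mem_filter.mp he).2
    exact Subtype.ext (Sym2.other_spec' hm)
  · intro v hv
    have hm : u ∈ (⟨s(u, v), (Finset.mem_filter.mp hv).2⟩ : G.edgeSet).1 :=
      Sym2.mem_mk_left u v
    have := Sym2.other_spec' hm
    exact Sym2.congr_right.mp this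
  · intro e he
    have hm := (Finset.mem_filter.mp he).2
    exact congrArg g (Sym2.other_spec' hm).symm

end GraphAux

theorem statement_12 {V : Type*} [Fintype V] [DecidableEq V]
    (G : SimpleGraph V) [DecidableRel G.Adj] (n m : ℕ)
    (hn : Fintype.card V = n) (hm : G.edgeFinset.card = m)
    (hconn : G.Connected) (hn2 : 2 ≤ n) :
    ∀ i j : V,
      resistanceDistance (triangulation G) (Sum.inl i) (Sum.inl j) =
        (1 / 3) * resistanceDistance (subdivision G) (Sum.inl i) (Sum.inl j) := by
  intro i j
  set W := V ⊕ G.edgeSet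
  set LS := ((subdivision G).lapMatrix ℝ) with hLS
  set LT := ((triangulation G).lapMatrix ℝ) with hLT
  have hSsym : LSᵀ = LS := (subdivision G).isSymm_lapMatrix ℝ
  have hTsym : LTᵀ = LT := (triangulation G).isSymm_lapMatrix ℝ
  have hexS : ∃ B, IsMoorePenrose LS B := exists_isMoorePenrose hSsym
  have hexT : ∃ B, IsMoorePenrose LT B := exists_isMoorePenrose hTsym
  have hBSsym : (hexS.choose)ᵀ = hexS.choose := isMoorePenrose_symm hSsym hexS.choose_spec
  have hBTsym : (hexT.choose)ᵀ = hexT.choose := isMoorePenrose_symm hTsym hexT.choose_spec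
  set δ : W → ℝ := Pi.single (Sum.inl i) 1 - Pi.single (Sum.inl j) 1 with hδ
  have hδsum : ∑ z, δ z = 0 := by
    simp [hδ, Finset.sum_sub_distrib, Finset.sum_pi_single]
  set x : W → ℝ := hexS.choose *ᵥ δ with hx
  have hLSx : LS *ᵥ x = δ :=
    lap_solve (subdivision_connected G hconn) hexS.choose_spec hδsum
  -- edge values
  have edge_val : ∀ (a b : V) (h : G.Adj a b),
      x (Sum.inr ⟨s(a, b), h⟩) = (x (Sum.inl a) + x (Sum.inl b)) / 2 := by
    intro a b h
    have hrow := congrFun hLSx (Sum.inr ⟨s(a, b), h⟩)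
    rw [lap_row] at hrow
    rw [Fintype.sum_sum_type] at hrow
    simp only [subdivision_adj_rl, subdivision_adj_rr, if_false, Finset.sum_const_zero,
      add_zero] at hrow
    have h2 : ∑ v : V, (if v ∈ s(a, b) then
        x (Sum.inr ⟨s(a, b), h⟩) - x (Sum.inl v) else 0)
        = (x (Sum.inr ⟨s(a, b), h⟩) - x (Sum.inl a))
          + (x (Sum.inr ⟨s(a, b), h⟩) - x (Sum.inl b)) :=
      sum_ite_mem_sym2 h.ne (fun v => x (Sum.inr ⟨s(a, b), h⟩) - x (Sum.inl v))
    rw [h2] at hrow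
    have hδ0 : δ (Sum.inr (⟨s(a, b), h⟩ : G.edgeSet)) = 0 := by
      simp [hδ, Pi.single_apply]
    rw [hδ0] at hrow
    linarith
  -- the incident-edge sum at a vertex u
  have edge_sum : ∀ u : V,
      ∑ e : G.edgeSet, (if u ∈ (e : Sym2 V) then x (Sum.inl u) - x (Sum.inr e) else 0)
      = ∑ v : V, (if G.Adj u v then (x (Sum.inl u) - x (Sum.inl v)) / 2 else 0) := by
    intro u
    have key := sum_edge_incident G u
      (fun s => if h : s ∈ G.edgeSet then x (Sum.inl u) - x (Sum.inr ⟨s, h⟩) else 0)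
    have hl : ∑ e : G.edgeSet, (if u ∈ (e : Sym2 V) then
        (if h : (e : Sym2 V) ∈ G.edgeSet then x (Sum.inl u) - x (Sum.inr ⟨(e : Sym2 V), h⟩)
          else 0) else 0)
        = ∑ e : G.edgeSet, (if u ∈ (e : Sym2 V) then x (Sum.inl u) - x (Sum.inr e) else 0) := by
      refine Finset.sum_congr rfl fun e _ => ?_
      rw [dif_pos e.2]
    have hr : ∑ v : V, (if G.Adj u v then
        (if h : s(u, v) ∈ G.edgeSet then x (Sum.inl u) - x (Sum.inr ⟨s(u, v), h⟩) else 0)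
          else 0)
        = ∑ v : V, (if G.Adj u v then (x (Sum.inl u) - x (Sum.inl v)) / 2 else 0) := by
      refine Finset.sum_congr rfl fun v _ => ?_
      by_cases h : G.Adj u v
      · rw [if_pos h, if_pos h]
        simp only [SimpleGraph.mem_edgeSet]
        rw [dif_pos h, edge_val u v h]
        ring
      · rw [if_neg h, if_neg h]
    rw [← hl, key, hr]
  -- key identity: LT x = 3 δ
  have hLTx : LT *ᵥ x = (3 : ℝ) • δ := by
    funext z
    cases z with
    | inr e =>
      have hrowT : (LT *ᵥ x) (Sum.inr e) = (LS *ᵥ x) (Sum.inr e) := by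
        rw [lap_row, lap_row, Fintype.sum_sum_type, Fintype.sum_sum_type]
        simp
      have hδ0 : δ (Sum.inr e) = 0 := by simp [hδ, Pi.single_apply]
      rw [hrowT, hLSx, hδ0]
      simp [hδ0]
    | inl u =>
      have hrowS := congrFun hLSx (Sum.inl u)
      rw [lap_row, Fintype.sum_sum_type] at hrowS
      simp only [subdivision_adj_ll, subdivision_adj_lr, if_false, Finset.sum_const_zero,
        zero_add] at hrowS
      rw [edge_sum u] at hrowS
      rw [lap_row, Fintype.sum_sum_type]
      simp only [triangulation_adj_ll, triangulation_adj_lr]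
      rw [edge_sum u]
      have hhalf : ∑ v : V, (if G.Adj u v then (x (Sum.inl u) - x (Sum.inl v)) / 2 else 0)
          = δ (Sum.inl u) := hrowS
      have hfull : ∑ v : V, (if G.Adj u v then x (Sum.inl u) - x (Sum.inl v) else 0)
          = 2 * δ (Sum.inl u) := by
        rw [← hhalf, Finset.mul_sum]
        refine Finset.sum_congr rfl fun v _ => ?_
        by_cases h : G.Adj u v
        · rw [if_pos h, if_pos h]; ring
        · rw [if_neg h, if_neg h]; ring
      rw [hfull, hhalf]
      simp only [Pi.smul_apply, smul_eq_mul]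
      ring
  have hLTx3 : LT *ᵥ ((1 / 3 : ℝ) • x) = δ := by
    rw [Matrix.mulVec_smul, hLTx, smul_smul]
    norm_num
  have hΩT : resistanceDistance (triangulation G) (Sum.inl i) (Sum.inl j) = δ ⬝ᵥ ((1/3 : ℝ) • x) := by
    rw [resistance_eq_quad (triangulation G) hexT hBTsym]
    exact quad_eq hTsym hexT.choose_spec.1 hLTx3
  have hΩS : resistanceDistance (subdivision G) (Sum.inl i) (Sum.inl j) = δ ⬝ᵥ x := by
    rw [resistance_eq_quad (subdivision G) hexS hBSsym]
  rw [hΩT, hΩS]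
  rw [dotProduct_smul]
  simp

end KirchhoffPaper
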